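/- Let B1, B2 be two disjoint bases of a matroid, let S ⊆ E, and suppose the exchange graph D(B1,B2) contains no directed cycle C with |V(C) \ S| = 1 and V(C) \ S ⊆ B1. Let K ⊆ S be a strongly connected component of the exchange graph restricted to S. Then for every x ∈ K ∩ B2 there exists a circuit C_x ⊆ B1 ∪ B2 such that B2 ∩ K ∩ C_x = {x} and B1 ∩ C_x ⊆ K. -/

import Mathlib

variable {α : Type*}

open Set


/-- A circuit of a matroid: a minimally dependent subset of the ground set. -/
def Matroid.IsCircuit' (M : Matroid α) (C : Set α) : Prop :=
  C ⊆ M.E ∧ ¬ M.Indep C ∧ ∀ D ⊂ C, M.Indep D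

/-- Edge relation of the exchange graph `D(B1,B2)`. -/
def ExchEdge (M : Matroid α) (B1 B2 : Set α) (x y : α) : Prop :=
  (x ∈ B1 ∧ y ∈ B2 ∧ M.IsBase (insert y (B1 \ {x}))) ∨
  (x ∈ B2 ∧ y ∈ B1 ∧ M.IsBase (insert y (B2 \ {x})))

/-- A directed cycle with respect to an edge relation `R`. -/
def IsCycle (R : α → α → Prop) (l : List α) : Prop :=
  l ≠ [] ∧ l.Nodup ∧ l.Chain' R ∧ ∀ h : l ≠ [], R (l.getLast h) (l.head h)

/-- `K` is a strongly connected component of the digraph with edge relation `R`: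
`K` is nonempty, any two of its vertices are mutually reachable, and it is maximal
with this property. -/
def IsSCC (R : α → α → Prop) (K : Set α) : Prop :=
  K.Nonempty ∧ (∀ x ∈ K, ∀ y ∈ K, Relation.ReflTransGen R x y) ∧
  (∀ x ∈ K, ∀ z, Relation.ReflTransGen R x z → Relation.ReflTransGen R z x → z ∈ K)

namespace SCCAux

/-- Candidate fundamental circuit minus the new element. -/
def fundJ (M : Matroid α) (e : α) (I : Set α) : Set α := {y ∈ I | e ∉ M.closure (I \ {y})}

/-- Fundamental circuit of `e` with respect to `I`. -/
def fundC (M : Matroid α) (e : α) (I : Set α) : Set α := insert e (fundJ M e I)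

lemma fundJ_subset (M : Matroid α) (e : α) (I : Set α) : fundJ M e I ⊆ I := sep_subset _ _

lemma fundC_subset (M : Matroid α) (e : α) (I : Set α) : fundC M e I ⊆ insert e I :=
  insert_subset_insert (fundJ_subset M e I)

lemma mem_fundJ_of_mem_fundC {M : Matroid α} {e : α} {I : Set α} {y : α}
    (h : y ∈ fundC M e I) (hne : y ≠ e) : y ∈ fundJ M e I := h.resolve_left hne

lemma closure_fundJ {M : Matroid α} {I : Set α} {e : α} (hI : M.Indep I)
    (he : e ∈ M.closure I) : e ∈ M.closure (fundJ M e I) := by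
  set J := fundJ M e I with hJdef
  set T := {y ∈ I | e ∈ M.closure (I \ {y})} with hTdef
  have hJT : J = I \ T := by
    ext z; simp only [hJdef, hTdef, fundJ, mem_sep_iff, mem_diff]; tauto
  rcases T.eq_empty_or_nonempty with hT | hT
  · rw [hJT, hT, diff_empty]; exact he
  · have hins : M.closure (⋂₀ ((fun y => I \ {y}) '' T)) =
        ⋂ X ∈ (fun y => I \ {y}) '' T, M.closure X :=
      hI.closure_sInter_eq_biInter_closure_of_forall_subset (hT.image _)
        (by rintro X ⟨y, hy, rfl⟩; exact diff_subset)
    have h1 : ⋂₀ ((fun y => I \ {y}) '' T) = J := by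
      rw [hJT]; ext z
      simp only [sInter_image, mem_iInter, mem_diff, mem_singleton_iff]
      constructor
      · intro h
        obtain ⟨y0, hy0⟩ := hT
        exact ⟨(h y0 hy0).1, fun hzT => (h z hzT).2 rfl⟩
      · rintro ⟨hzI, hzT⟩ y hy
        exact ⟨hzI, fun h => hzT (h ▸ hy)⟩
    rw [← h1, hins]
    rw [mem_iInter₂]
    rintro X ⟨y, hy, rfl⟩
    exact hy.2

lemma fundC_circuit {M : Matroid α} {I : Set α} {e : α} (hI : M.Indep I)
    (he : e ∈ M.closure I) (heI : e ∉ I) : M.IsCircuit' (fundC M e I) := by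
  have heE : e ∈ M.E := M.closure_subset_ground I he
  have hJI : fundJ M e I ⊆ I := fundJ_subset M e I
  have hJind : M.Indep (fundJ M e I) := hI.subset hJI
  have heJ : e ∉ fundJ M e I := fun h => heI (hJI h)
  refine ⟨insert_subset heE (hJI.trans hI.subset_ground), ?_, ?_⟩
  · exact (hJind.insert_dep_iff.mpr ⟨closure_fundJ hI he, heJ⟩).not_indep
  · intro D hD
    by_cases heD : e ∈ D
    · have hex : ∃ y ∈ fundJ M e I, y ∉ D := by
        by_contra h
        push_neg at h
        exact hD.ne (subset_antisymm hD.subset (insert_subset heD h))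
      obtain ⟨y, hyJ, hyD⟩ := hex
      have hind : M.Indep (insert e (I \ {y})) :=
        ((hI.subset diff_subset).notMem_closure_iff_of_notMem
          (fun h => heI h.1) heE).mp hyJ.2
      refine hind.subset ?_
      intro z hz
      rcases hD.subset hz with rfl | hzJ
      · exact mem_insert _ _
      · exact mem_insert_of_mem _ ⟨hJI hzJ, fun h => hyD (h ▸ hz)⟩
    · refine hI.subset ?_
      intro z hz
      exact hJI ((hD.subset hz).resolve_left (fun h => heD (h ▸ hz)))

lemma fundJ_exchange {M : Matroid α} {B : Set α} {e y : α} (hB : M.IsBase B) (heB : e ∉ B)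
    (heE : e ∈ M.E) (hy : y ∈ fundJ M e B) : M.IsBase (insert e (B \ {y})) := by
  have hind : M.Indep (insert e (B \ {y})) :=
    ((hB.indep.subset diff_subset).notMem_closure_iff_of_notMem
      (fun h => heB h.1) heE).mp hy.2
  exact hB.exchange_isBase_of_indep heB hind

lemma chain'_head_or_pred {R : α → α → Prop} :
    ∀ (p : List α), p.Chain' R → ∀ z ∈ p, p.head? = some z ∨ ∃ w ∈ p, R w z := by
  intro p
  induction p with
  | nil => intro _ z hz; simp at hz
  | cons a t ih =>
    intro hc z hz
    rcases List.mem_cons.mp hz with rfl | hzt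
    · exact Or.inl rfl
    · have ht : t.Chain' R := (List.isChain_cons.mp hc).2
      rcases ih ht z hzt with h | ⟨w, hw, hR⟩
      · refine Or.inr ⟨a, List.mem_cons_self, ?_⟩
        exact (List.isChain_cons.mp hc).1 z h
      · exact Or.inr ⟨w, List.mem_cons_of_mem _ hw, hR⟩

lemma exists_nodup_chain {R : α → α → Prop} {a b : α} (h : Relation.ReflTransGen R a b) :
    ∃ p : List α, p.Chain' R ∧ p.Nodup ∧ p.head? = some a ∧ p.getLast? = some b := by
  induction h using Relation.ReflTransGen.head_induction_on with
  | refl => exact ⟨[b], List.isChain_singleton b, List.nodup_singleton b, rfl, rfl⟩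
  | head hac _ ih =>
    rename_i a c _
    obtain ⟨p, hc, hn, hh, hl⟩ := ih
    by_cases hap : a ∈ p
    · obtain ⟨s, t, rfl⟩ := List.append_of_mem hap
      refine ⟨a :: t, hc.suffix ⟨s, rfl⟩, (List.IsSuffix.sublist ⟨s, rfl⟩).nodup hn,
        rfl, ?_⟩
      rw [← hl, List.getLast?_append_of_ne_nil _ (List.cons_ne_nil a t)]
    · have hpne : p ≠ [] := by rintro rfl; simp at hh
      refine ⟨a :: p, List.isChain_cons.mpr ⟨fun y hy => ?_, hc⟩, List.nodup_cons.mpr ⟨hap, hn⟩,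
        rfl, ?_⟩
      · rw [hh] at hy; rw [Option.mem_some_iff] at hy; exact hy ▸ hac
      · rw [show a :: p = [a] ++ p from rfl, List.getLast?_append_of_ne_nil _ hpne, hl]

end SCCAux

/-- Suppose the exchange graph `D(B1,B2)` has no directed cycle `C` with
`|V(C) \ S| = 1` and `V(C) \ S ⊆ B1`, and let `K ⊆ S` be a strongly connected component
of the exchange graph restricted to `S`. Then every `x ∈ K ∩ B2` has a witness circuit
`C_x ⊆ B1 ∪ B2` with `B2 ∩ K ∩ C_x = {x}` and `B1 ∩ C_x ⊆ K`. -/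
theorem scc_witness_circuits (M : Matroid α) (B1 B2 S : Set α)
    (hB1 : M.IsBase B1) (hB2 : M.IsBase B2) (hdisj : Disjoint B1 B2) (hS : S ⊆ M.E)
    (hnocyc : ¬ ∃ l : List α, IsCycle (ExchEdge M B1 B2) l ∧
      ({x | x ∈ l} \ S).encard = 1 ∧ {x | x ∈ l} \ S ⊆ B1)
    (K : Set α) (hKS : K ⊆ S)
    (hK : IsSCC (fun x y => ExchEdge M B1 B2 x y ∧ x ∈ S ∧ y ∈ S) K) :
    ∀ x ∈ K ∩ B2, ∃ C : Set α, C ⊆ B1 ∪ B2 ∧ M.IsCircuit' C ∧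
      B2 ∩ K ∩ C = {x} ∧ B1 ∩ C ⊆ K := by
  obtain ⟨hKne, hKconn, hKmax⟩ := hK
  rintro x ⟨hxK, hxB2⟩
  set A := (B1 ∩ K) ∪ (B2 \ K) with hAdef
  have hAE : A ⊆ M.E :=
    union_subset (inter_subset_left.trans hB1.subset_ground)
      (diff_subset.trans hB2.subset_ground)
  have hxE : x ∈ M.E := hB2.subset_ground hxB2
  have hxB1 : x ∉ B1 := fun h => (disjoint_left.mp hdisj h) hxB2
  have hxF : x ∈ M.closure A := by
    by_contra hxF
    have hxclB1 : x ∈ M.closure B1 := by rw [hB1.closure_eq]; exact hxE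
    have h1 : ¬ (SCCAux.fundJ M x B1 ⊆ M.closure A) := by
      intro hsub
      exact hxF (M.closure_subset_closure_of_subset_closure hsub
        (SCCAux.closure_fundJ hB1.indep hxclB1))
    obtain ⟨y, hyJ, hyF⟩ := not_subset.mp h1
    have hyB1 : y ∈ B1 := SCCAux.fundJ_subset M x B1 hyJ
    have hyK : y ∉ K := fun h => hyF (M.subset_closure A hAE (Or.inl ⟨hyB1, h⟩))
    have hedge1 : ExchEdge M B1 B2 y x :=
      Or.inl ⟨hyB1, hxB2, SCCAux.fundJ_exchange hB1 hxB1 hxE hyJ⟩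
    have hyE : y ∈ M.E := hB1.subset_ground hyB1
    have hyB2 : y ∉ B2 := disjoint_left.mp hdisj hyB1
    have hyclB2 : y ∈ M.closure B2 := by rw [hB2.closure_eq]; exact hyE
    have h2 : ¬ (SCCAux.fundJ M y B2 ⊆ B2 \ K) := by
      intro hsub
      refine hyF (M.closure_subset_closure_of_subset_closure ?_
        (SCCAux.closure_fundJ hB2.indep hyclB2))
      exact fun z hz => M.subset_closure A hAE (Or.inr (hsub hz))
    obtain ⟨x1, hx1J, hx1n⟩ := not_subset.mp h2
    have hx1B2 : x1 ∈ B2 := SCCAux.fundJ_subset M y B2 hx1J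
    have hx1K : x1 ∈ K := by
      by_contra h; exact hx1n ⟨hx1B2, h⟩
    have hedge2 : ExchEdge M B1 B2 x1 y :=
      Or.inr ⟨hx1B2, hyB1, SCCAux.fundJ_exchange hB2 hyB2 hyE hx1J⟩
    have hyS : y ∉ S := by
      intro hyS
      refine hyK (hKmax x1 hx1K y
        (Relation.ReflTransGen.single ⟨hedge2, hKS hx1K, hyS⟩) ?_)
      exact (Relation.ReflTransGen.single ⟨hedge1, hyS, hKS hxK⟩).trans
        (hKconn x hxK x1 hx1K)
    obtain ⟨p, hchain, hnodup, hhead, hlast⟩ :=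
      SCCAux.exists_nodup_chain (hKconn x hxK x1 hx1K)
    have hpS : ∀ z ∈ p, z ∈ S := by
      intro z hz
      rcases SCCAux.chain'_head_or_pred p hchain z hz with h | ⟨w, _, hR⟩
      · rw [hhead] at h
        obtain rfl := Option.some_inj.mp h.symm
        exact hKS hxK
      · exact hR.2.2
    have hpne : p ≠ [] := by rintro rfl; simp at hhead
    have hset : {z | z ∈ y :: p} \ S = {y} := by
      ext z
      simp only [mem_diff, mem_setOf_eq, List.mem_cons, mem_singleton_iff]
      constructor
      · rintro ⟨rfl | hzp, hzS⟩
        · rfl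
        · exact absurd (hpS z hzp) hzS
      · rintro rfl; exact ⟨Or.inl rfl, hyS⟩
    refine hnocyc ⟨y :: p, ⟨List.cons_ne_nil _ _, ?_, ?_, ?_⟩, ?_, ?_⟩
    · exact List.nodup_cons.mpr ⟨fun h => hyS (hpS y h), hnodup⟩
    · refine List.isChain_cons.mpr ⟨?_, hchain.imp (fun a b h => h.1)⟩
      intro z hz
      rw [hhead, Option.mem_some_iff] at hz
      exact hz ▸ hedge1
    · intro h
      have h2 : (y :: p).getLast h = x1 := by
        have h3 : (y :: p).getLast? = some x1 := by
          rw [show y :: p = [y] ++ p from rfl,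
            List.getLast?_append_of_ne_nil _ hpne, hlast]
        rw [List.getLast?_eq_getLast_of_ne_nil h] at h3
        exact Option.some_inj.mp h3
      rw [h2]
      exact hedge2
    · rw [hset, encard_singleton]
    · rw [hset]
      rintro z rfl
      exact hyB1
  obtain ⟨I, hI⟩ := M.exists_isBasis A hAE
  have hxclI : x ∈ M.closure I := by rw [hI.closure_eq_closure]; exact hxF
  have hxA : x ∉ A := by
    rintro (⟨h1, _⟩ | ⟨_, h2⟩)
    · exact hxB1 h1
    · exact h2 hxK
  have hxI : x ∉ I := fun h => hxA (hI.subset h)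
  refine ⟨SCCAux.fundC M x I, ?_, SCCAux.fundC_circuit hI.indep hxclI hxI, ?_, ?_⟩
  · intro z hz
    rcases SCCAux.fundC_subset M x I hz with rfl | hzI
    · exact Or.inr hxB2
    · rcases hI.subset hzI with ⟨h, _⟩ | ⟨h, _⟩
      · exact Or.inl h
      · exact Or.inr h
  · ext z
    simp only [mem_inter_iff, mem_singleton_iff]
    constructor
    · rintro ⟨⟨hzB2, hzK⟩, hzC⟩
      rcases SCCAux.fundC_subset M x I hzC with rfl | hzI
      · rfl
      · rcases hI.subset hzI with ⟨h, _⟩ | ⟨_, h⟩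
        · exact absurd hzB2 (disjoint_left.mp hdisj h)
        · exact absurd hzK h
    · rintro rfl
      exact ⟨⟨hxB2, hxK⟩, mem_insert _ _⟩
  · rintro z ⟨hzB1, hzC⟩
    rcases SCCAux.fundC_subset M x I hzC with rfl | hzI
    · exact absurd hzB1 hxB1
    · rcases hI.subset hzI with ⟨_, h⟩ | ⟨h, _⟩
      · exact h
      · exact absurd h (disjoint_left.mp hdisj hzB1)
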